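/- arXiv:2207.03924 — 2 statements merged into one kernel-verified Lean document; each statement's English description precedes it below -/
import Mathlib

section
/- Let J be a finite index set, let G be a finite simple graph without isolated vertices, and for each j ∈ J let G_j be a finite simple graph without isolated vertices, Λ_j ⊂ [0,2] a finite set of real numbers, t'_j, t''_j ∈ ℕ with total shift t_j = t'_j + t''_j, and μ_j ∈ ℕ. Assume: (i) G_j ≼[t'_j] G and G ≼[t''_j] G_j for the standard Laplacians; (ii) every λ ∈ Λ_j is an eigenvalue of Δ_{G_j} with multiplicity at least μ_j, and μ_j > t_j; (iii) the sets Λ_j, j ∈ J, are pairwise disjoint; (iv) |V(G)| = Σ_{j∈J} (μ_j − t_j)·|Λ_j|. Then the spectrum of Δ_G as a multiset equals the disjoint multiset union ⨄_{j∈J} Λ_j^{(μ_j − t_j)}, i.e. each λ ∈ Λ_j occurs in spec(G) with multiplicity exactly μ_j − t_j and there are no other eigenvalues. -/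
open scoped Classical

noncomputable section

/-- Degree of a vertex. -/
def deg {V : Type*} [Fintype V] (G : SimpleGraph V) (u : V) : ℕ :=
  Nat.card {v | G.Adj u v}

/-- Standard (normalised) Laplacian. -/
def stdLap {V : Type*} [Fintype V] (G : SimpleGraph V) : Matrix V V ℝ :=
  fun u v =>
    if u = v then 1
    else if G.Adj u v then -(1 / Real.sqrt ((deg G u : ℝ) * (deg G v : ℝ)))
    else 0

/-- Signless standard Laplacian. -/
def stdLapP {V : Type*} [Fintype V] (G : SimpleGraph V) : Matrix V V ℝ :=
  fun u v =>
    if u = v then 1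
    else if G.Adj u v then 1 / Real.sqrt ((deg G u : ℝ) * (deg G v : ℝ))
    else 0

/-- Spectrum (multiset of eigenvalues, with algebraic multiplicity). -/
def spec {V : Type*} [Fintype V] (G : SimpleGraph V) : Multiset ℝ :=
  (stdLap G).charpoly.roots

def specP {V : Type*} [Fintype V] (G : SimpleGraph V) : Multiset ℝ :=
  (stdLapP G).charpoly.roots

/-- `eig G k` is the k-th smallest eigenvalue (1-based). -/
def eig {V : Type*} [Fintype V] (G : SimpleGraph V) (k : ℕ) : ℝ :=
  ((spec G).sort (· ≤ ·)).getD (k - 1) 0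

def eigP {V : Type*} [Fintype V] (G : SimpleGraph V) (k : ℕ) : ℝ :=
  ((specP G).sort (· ≤ ·)).getD (k - 1) 0

end

/-- `SpecLE G G' t` is the spectral preorder relation `G ≼[t] G'`. -/
def SpecLE {V V' : Type*} [Fintype V] [Fintype V']
    (G : SimpleGraph V) (G' : SimpleGraph V') (t : ℕ) : Prop :=
  Fintype.card V ≥ Fintype.card V' - t ∧
    ∀ k, 1 ≤ k → k ≤ Fintype.card V' - t → eig G k ≤ eig G' (k + t)


open Polynomial

lemma charpoly_conj_unitary {n : Type*} [Fintype n] [DecidableEq n]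
    (U D : Matrix n n ℝ) (hU : U ∈ Matrix.unitaryGroup n ℝ) :
    (U * D * star U).charpoly = D.charpoly := by
  have hUV : U * star U = 1 := Matrix.mem_unitaryGroup_iff.mp hU
  have hVU : star U * U = 1 := Matrix.mem_unitaryGroup_iff'.mp hU
  have hmap : ∀ M N : Matrix n n ℝ, (M * N).map (C : ℝ →+* ℝ[X])
      = M.map C * N.map C := fun M N => Matrix.map_mul
  have honemap : ((1 : Matrix n n ℝ)).map (C : ℝ →+* ℝ[X]) = 1 := by
    ext i j; by_cases h : i = j <;> simp [Matrix.one_apply, h]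
  have hone : U.map (C : ℝ →+* ℝ[X]) * (star U).map C = 1 := by
    rw [← hmap, hUV, honemap]
  have hone' : (star U).map (C : ℝ →+* ℝ[X]) * U.map C = 1 := by
    rw [← hmap, hVU, honemap]
  have hscal : U.map (C : ℝ →+* ℝ[X]) * (Matrix.scalar n (X : ℝ[X])) * (star U).map C
      = Matrix.scalar n (X : ℝ[X]) := by
    rw [mul_assoc, Matrix.scalar_commute (X : ℝ[X]) (fun r => Commute.all _ _)
      ((star U).map C), ← mul_assoc, hone, one_mul]
  have hcm : Matrix.charmatrix (U * D * star U)
      = U.map C * Matrix.charmatrix D * (star U).map C := by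
    rw [Matrix.charmatrix, Matrix.charmatrix]
    simp only [RingHom.mapMatrix_apply]
    rw [hmap, hmap, mul_sub, sub_mul, hscal]
  rw [Matrix.charpoly, Matrix.charpoly, hcm, Matrix.det_mul, Matrix.det_mul,
    mul_comm, ← mul_assoc, ← Matrix.det_mul, hone']
  simp

lemma charpoly_diagonal_real {n : Type*} [Fintype n] [DecidableEq n] (d : n → ℝ) :
    (Matrix.diagonal d).charpoly = ∏ i, (X - C (d i)) := by
  have : Matrix.charmatrix (Matrix.diagonal d) = Matrix.diagonal fun i => X - C (d i) := by
    ext i j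
    by_cases h : i = j
    · subst h; simp [Matrix.charmatrix_apply_eq]
    · simp [Matrix.charmatrix_apply_ne _ _ _ h, Matrix.diagonal_apply_ne _ h]
  rw [Matrix.charpoly, this, Matrix.det_diagonal]

open Polynomial in
lemma spec_eq_map {V : Type*} [Fintype V] (G : SimpleGraph V) :
    ∃ ev : V → ℝ, spec G = Multiset.map ev Finset.univ.val := by
  classical
  have hA : (stdLap G).IsHermitian := by
    ext i j
    simp only [Matrix.conjTranspose_apply, star_trivial, stdLap]
    by_cases h : i = j
    · simp [h]
    · simp only [if_neg h, if_neg (Ne.symm h)]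
      by_cases ha : G.Adj i j
      · rw [if_pos ha, if_pos (G.adj_comm i j |>.mp ha), mul_comm]
      · rw [if_neg ha, if_neg (fun hc => ha ((G.adj_comm j i).mp hc))]
  refine ⟨hA.eigenvalues, ?_⟩
  have hst := hA.spectral_theorem
  have hch : (stdLap G).charpoly = (Matrix.diagonal hA.eigenvalues).charpoly := by
    conv_lhs => rw [hst]
    have := charpoly_conj_unitary (hA.eigenvectorUnitary : Matrix V V ℝ)
      (Matrix.diagonal (RCLike.ofReal ∘ hA.eigenvalues)) (hA.eigenvectorUnitary).2
    simpa using this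
  rw [spec, hch, charpoly_diagonal_real]
  have : (∏ i, (X - C (hA.eigenvalues i)))
      = (Multiset.map (fun a => X - C a) (Multiset.map hA.eigenvalues Finset.univ.val)).prod := by
    rw [Multiset.map_map]
    rfl
  rw [this, Polynomial.roots_multiset_prod_X_sub_C]

lemma spec_card {V : Type*} [Fintype V] (G : SimpleGraph V) :
    Multiset.card (spec G) = Fintype.card V := by
  obtain ⟨ev, h⟩ := spec_eq_map G
  simp [h, Finset.card_univ]

lemma count_spec_eq {U : Type*} [Fintype U] (H : SimpleGraph U) (x : ℝ) :
    (spec H).count x =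
      (Finset.univ.filter
        (fun i : Fin ((spec H).sort (· ≤ ·)).length => x = ((spec H).sort (· ≤ ·)).get i)).card := by
  classical
  set l := (spec H).sort (· ≤ ·) with hl
  have h1 : spec H = (l : Multiset ℝ) := (Multiset.sort_eq _ _).symm
  have h2 : (l : Multiset ℝ) = Multiset.map l.get Finset.univ.val := by
    rw [Fin.univ_val_map, List.ofFn_get]
  rw [h1, h2, Multiset.count_map]
  rfl

lemma eig_eq_get {U : Type*} [Fintype U] (H : SimpleGraph U) {m : ℕ}
    (h : m - 1 < ((spec H).sort (· ≤ ·)).length) :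
    eig H m = ((spec H).sort (· ≤ ·)).get ⟨m - 1, h⟩ := by
  rw [eig]
  exact List.getD_eq_getElem _ _ h

lemma sort_length_spec {U : Type*} [Fintype U] (H : SimpleGraph U) :
    ((spec H).sort (· ≤ ·)).length = Fintype.card U := by
  rw [Multiset.length_sort, spec_card]

lemma window_of_count {U : Type*} [Fintype U] (H : SimpleGraph U) {x : ℝ} {μ : ℕ} (hμ : 0 < μ)
    (h : μ ≤ (spec H).count x) :
    ∃ a b : ℕ, 1 ≤ a ∧ a ≤ b ∧ b ≤ Fintype.card U ∧ μ ≤ b + 1 - a ∧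
      ∀ m, a ≤ m → m ≤ b → eig H m = x := by
  classical
  set l := (spec H).sort (· ≤ ·) with hl
  set S := Finset.univ.filter (fun i : Fin l.length => x = l.get i) with hS
  have hcount : (spec H).count x = S.card := count_spec_eq H x
  have hSne : S.Nonempty := Finset.card_pos.mp (by omega)
  set i0 := S.min' hSne with hi0
  set i1 := S.max' hSne with hi1
  have h01 : (i0 : ℕ) ≤ (i1 : ℕ) := S.min'_le _ (S.max'_mem hSne)
  have hcard : S.card ≤ (i1 : ℕ) + 1 - (i0 : ℕ) := by
    have hsub : S ⊆ Finset.Icc i0 i1 := fun i hi =>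
      Finset.mem_Icc.mpr ⟨S.min'_le i hi, S.le_max' i hi⟩
    calc S.card ≤ (Finset.Icc i0 i1).card := Finset.card_le_card hsub
      _ = (i1 : ℕ) + 1 - (i0 : ℕ) := Fin.card_Icc _ _
  have hlen : l.length = Fintype.card U := sort_length_spec H
  have hi1lt : (i1 : ℕ) < l.length := i1.isLt
  have e0 : x = l.get i0 := (Finset.mem_filter.mp (S.min'_mem hSne)).2
  have e1 : x = l.get i1 := (Finset.mem_filter.mp (S.max'_mem hSne)).2
  refine ⟨(i0 : ℕ) + 1, (i1 : ℕ) + 1, by omega, by omega, by omega, by omega, ?_⟩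
  intro m hm1 hm2
  have hmlt : m - 1 < l.length := by omega
  have hsorted : l.Pairwise (· ≤ ·) := Multiset.pairwise_sort _ _
  have hlow : l.get i0 ≤ l.get ⟨m - 1, hmlt⟩ :=
    hsorted.rel_get_of_le (by rw [Fin.le_def]; simp; omega)
  have hhigh : l.get ⟨m - 1, hmlt⟩ ≤ l.get i1 :=
    hsorted.rel_get_of_le (by rw [Fin.le_def]; simp; omega)
  rw [eig_eq_get H hmlt]
  rw [← e0] at hlow
  rw [← e1] at hhigh
  linarith

lemma count_of_window {U : Type*} [Fintype U] (H : SimpleGraph U) {x : ℝ} {a b : ℕ}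
    (ha : 1 ≤ a) (hab : a ≤ b) (hb : b ≤ Fintype.card U)
    (hx : ∀ m, a ≤ m → m ≤ b → eig H m = x) :
    b + 1 - a ≤ (spec H).count x := by
  classical
  set l := (spec H).sort (· ≤ ·) with hl
  set S := Finset.univ.filter (fun i : Fin l.length => x = l.get i) with hS
  have hcount : (spec H).count x = S.card := count_spec_eq H x
  have hlen : l.length = Fintype.card U := sort_length_spec H
  have hn : 0 < l.length := by omega
  have hmaps : ∀ m ∈ Finset.Icc (a - 1) (b - 1),
      (⟨m % l.length, Nat.mod_lt _ hn⟩ : Fin l.length) ∈ S := by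
    intro m hm
    rw [Finset.mem_Icc] at hm
    have hmod : m % l.length = m := Nat.mod_eq_of_lt (by omega)
    rw [hS, Finset.mem_filter]
    refine ⟨Finset.mem_univ _, ?_⟩
    have := hx (m + 1) (by omega) (by omega)
    have hmlt : (m + 1) - 1 < l.length := by omega
    rw [eig_eq_get H hmlt] at this
    simp only [hmod]
    exact this.symm
  have hinj : ∀ m ∈ Finset.Icc (a-1) (b-1), ∀ m' ∈ Finset.Icc (a-1) (b-1),
      (⟨m % l.length, Nat.mod_lt _ hn⟩ : Fin l.length) = ⟨m' % l.length, Nat.mod_lt _ hn⟩ →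
      m = m' := by
    intro m hm m' hm' he
    rw [Finset.mem_Icc] at hm hm'
    have h1 : m % l.length = m := Nat.mod_eq_of_lt (by omega)
    have h2 : m' % l.length = m' := Nat.mod_eq_of_lt (by omega)
    have := Fin.mk.injEq _ _ _ _ ▸ he
    rw [Fin.mk_eq_mk] at he
    omega
  have := Finset.card_le_card_of_injOn _ hmaps hinj
  rw [Nat.card_Icc] at this
  omega

/-- determination of the spectrum by bracketing with auxiliary
graphs having eigenvalues of high multiplicity (Theorem `main.idea`). -/
theorem stmt_3 {J : Type*} [Fintype J] {V : Type*} [Fintype V] (G : SimpleGraph V)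
    {W : J → Type*} [∀ j, Fintype (W j)] (Gf : ∀ j, SimpleGraph (W j))
    (Λ : J → Finset ℝ) (t' t'' μ : J → ℕ)
    (hG : ∀ v, 0 < deg G v) (hGf : ∀ j v, 0 < deg (Gf j) v)
    (hΛ : ∀ j, ∀ x ∈ Λ j, x ∈ Set.Icc (0 : ℝ) 2)
    (h1 : ∀ j, SpecLE (Gf j) G (t' j) ∧ SpecLE G (Gf j) (t'' j))
    (h2 : ∀ j, ∀ x ∈ Λ j, μ j ≤ (spec (Gf j)).count x)
    (h2' : ∀ j, t' j + t'' j < μ j)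
    (h3 : ∀ j j', j ≠ j' → Disjoint (Λ j) (Λ j'))
    (h4 : Fintype.card V = ∑ j, (μ j - (t' j + t'' j)) * (Λ j).card) :
    spec G = ∑ j, (μ j - (t' j + t'' j)) • (Λ j).val := by
  classical
  have key : ∀ j, ∀ x ∈ Λ j, μ j - (t' j + t'' j) ≤ (spec G).count x := by
    intro j x hx
    obtain ⟨hle1c, hle1⟩ := (h1 j).1
    obtain ⟨hle2c, hle2⟩ := (h1 j).2
    have hμpos : 0 < μ j := lt_of_le_of_lt (Nat.zero_le _) (h2' j)
    obtain ⟨a, b, ha, hab, hb, hwin, hval⟩ := window_of_count (Gf j) hμpos (h2 j x hx)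
    have h2'' := h2' j
    have hwb : a + t' j ≤ b - t'' j := by omega
    have hb2 : b - t'' j ≤ Fintype.card V := by omega
    have hcw := count_of_window G (x := x) (a := a + t' j) (b := b - t'' j)
      (by omega) hwb hb2 ?_
    · omega
    · intro m hm1 hm2
      have hupper : eig G m ≤ x := by
        have h5 := hle2 m (by omega) (by omega)
        have h6 : eig (Gf j) (m + t'' j) = x := hval _ (by omega) (by omega)
        rw [h6] at h5; exact h5
      have hlower : x ≤ eig G m := by
        have h5 := hle1 (m - t' j) (by omega) (by omega)
        have h7 : m - t' j + t' j = m := by omega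
        rw [h7] at h5
        have h6 : eig (Gf j) (m - t' j) = x := hval _ (by omega) (by omega)
        rw [h6] at h5; exact h5
      exact le_antisymm hupper hlower
  set T : Multiset ℝ := ∑ j, (μ j - (t' j + t'' j)) • (Λ j).val with hT
  have hcountT : ∀ x : ℝ, T.count x = ∑ j, (μ j - (t' j + t'' j)) * (Λ j).val.count x := by
    intro x
    rw [hT, Multiset.count_sum']
    exact Finset.sum_congr rfl fun j _ => Multiset.count_nsmul x _ _
  have hTle : T ≤ spec G := by
    rw [Multiset.le_iff_count]
    intro x
    rw [hcountT]
    by_cases hxin : ∃ j, x ∈ Λ j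
    · obtain ⟨j0, hj0⟩ := hxin
      have hsum : ∑ j, (μ j - (t' j + t'' j)) * (Λ j).val.count x
          = (μ j0 - (t' j0 + t'' j0)) * (Λ j0).val.count x := by
        apply Finset.sum_eq_single j0
        · intro j _ hne
          have : x ∉ Λ j := fun hxj =>
            (Finset.disjoint_left.mp (h3 j j0 hne) hxj) hj0
          rw [Multiset.count_eq_zero_of_notMem (by simpa using this), mul_zero]
        · intro hj; exact absurd (Finset.mem_univ j0) hj
      rw [hsum]
      have hc1 : (Λ j0).val.count x = 1 :=
        Multiset.count_eq_one_of_mem (Λ j0).nodup hj0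
      rw [hc1, mul_one]
      exact key j0 x hj0
    · push_neg at hxin
      have : ∀ j ∈ Finset.univ, (μ j - (t' j + t'' j)) * (Λ j).val.count x = 0 := by
        intro j _
        rw [Multiset.count_eq_zero_of_notMem (by simpa using hxin j), mul_zero]
      rw [Finset.sum_eq_zero this]
      exact Nat.zero_le _
  have hcardT : Multiset.card T = Fintype.card V := by
    rw [hT, h4]
    rw [Multiset.card_sum]
    exact Finset.sum_congr rfl fun j _ => by
      rw [Multiset.card_nsmul]; rfl
  have hcardG : Multiset.card (spec G) = Fintype.card V := spec_card G
  exact (Multiset.eq_of_le_of_card_le hTle (by omega)).symm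
end

section
/- Let r ≥ 2 and let K̂_r be the graph on 2r vertices obtained from the complete graph K_r by attaching a pendant edge to each of its r vertices. Then both (2r − 1 − √(4r+1))/(2r) and (2r − 1 + √(4r+1))/(2r) are eigenvalues of the signless standard Laplacian Δ_{K̂_r⁺}, each with multiplicity at least r − 1. -/
open scoped Classical

/-- `hatK r` is the complete graph `K_r` (vertices `.inl i`) with a pendant
vertex `.inr i` attached to each vertex `.inl i`. -/
def hatK (r : ℕ) : SimpleGraph (Fin r ⊕ Fin r) where
  Adj x y :=
    match x, y with
    | .inl i, .inl j => i ≠ j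
    | .inl i, .inr j => i = j
    | .inr i, .inl j => i = j
    | .inr _, .inr _ => False
  symm := by
    constructor
    rintro (i | i) (j | j) h
    · exact h.symm
    · exact h.symm
    · exact h.symm
    · exact h
  loopless := by
    constructor
    rintro (i | i) h
    · exact h rfl
    · exact h


open Polynomial in
theorem my_charpoly_sub_smul_one {n : Type*} [Fintype n] [DecidableEq n]
    (A : Matrix n n ℝ) (μ : ℝ) :
    (A - μ • 1).charpoly = A.charpoly.comp (X + C μ) := by
  let f : ℝ[X] →+* ℝ[X] := (aeval (X + C μ) : ℝ[X] →ₐ[ℝ] ℝ[X]).toRingHom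
  have hmap : (Matrix.charmatrix A).map f = Matrix.charmatrix (A - μ • 1) := by
    ext i j : 2
    by_cases h : i = j
    · subst h
      simp only [Matrix.map_apply, Matrix.charmatrix_apply_eq, Matrix.sub_apply,
        Matrix.smul_apply, Matrix.one_apply_eq, map_sub, f, AlgHom.toRingHom_eq_coe,
        RingHom.coe_coe, aeval_X, aeval_C, smul_eq_mul, mul_one]
      rw [algebraMap_eq]
      ring
    · simp only [Matrix.map_apply, Matrix.charmatrix_apply_ne _ _ _ h, Matrix.sub_apply,
        Matrix.smul_apply, Matrix.one_apply_ne h, smul_eq_mul, mul_zero, sub_zero,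
        f, AlgHom.toRingHom_eq_coe, RingHom.coe_coe, map_neg, aeval_C]
      rw [algebraMap_eq]
  rw [Matrix.charpoly, Matrix.charpoly, ← hmap, ← RingHom.mapMatrix_apply, ← RingHom.map_det]
  rfl

open Polynomial Module in
theorem my_count_roots_charpoly_ge {n : Type*} [Fintype n] [DecidableEq n]
    (A : Matrix n n ℝ) (μ : ℝ) (k : ℕ)
    (hk : k ≤ Module.finrank ℝ (LinearMap.ker (Matrix.toLin' (A - μ • (1 : Matrix n n ℝ))))) :
    k ≤ Polynomial.rootMultiplicity μ A.charpoly := by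
  classical
  rw [Polynomial.rootMultiplicity_eq_natTrailingDegree, ← my_charpoly_sub_smul_one]
  set B := A - μ • (1 : Matrix n n ℝ) with hB
  have hcp : (Matrix.toLin' B : Module.End ℝ (n → ℝ)).charpoly = B.charpoly := by
    rw [← LinearMap.charpoly_toMatrix (Matrix.toLin' B) (Pi.basisFun ℝ n),
        LinearMap.toMatrix_eq_toMatrix', LinearMap.toMatrix'_toLin']
  rw [← hcp, ← LinearMap.finrank_maxGenEigenspace_zero_eq]
  refine hk.trans (Submodule.finrank_mono ?_)
  intro x hx
  rw [Module.End.mem_maxGenEigenspace]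
  exact ⟨1, by simpa using LinearMap.mem_ker.mp hx⟩

lemma my_hatK_adj_ll (r : ℕ) (i j : Fin r) : (hatK r).Adj (.inl i) (.inl j) ↔ i ≠ j := Iff.rfl
lemma my_hatK_adj_lr (r : ℕ) (i j : Fin r) : (hatK r).Adj (.inl i) (.inr j) ↔ i = j := Iff.rfl
lemma my_hatK_adj_rl (r : ℕ) (i j : Fin r) : (hatK r).Adj (.inr i) (.inl j) ↔ i = j := Iff.rfl
lemma my_hatK_adj_rr (r : ℕ) (i j : Fin r) : ¬ (hatK r).Adj (.inr i) (.inr j) := fun h => h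

lemma my_deg_inr (r : ℕ) (i : Fin r) : deg (hatK r) (Sum.inr i) = 1 := by
  have hset : {v | (hatK r).Adj (Sum.inr i) v} = {Sum.inl i} := by
    ext (j | j)
    · simp [my_hatK_adj_rl, eq_comm]
    · simp [my_hatK_adj_rr r i j]
  rw [deg, Nat.card_coe_set_eq, hset, Set.ncard_singleton]

lemma my_deg_inl (r : ℕ) (hr : 1 ≤ r) (i : Fin r) : deg (hatK r) (Sum.inl i) = r := by
  have hset : {v | (hatK r).Adj (Sum.inl i) v}
      = insert (Sum.inr i) (Sum.inl '' {j : Fin r | j ≠ i}) := by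
    ext (j | j)
    · simp [my_hatK_adj_ll, ne_comm]
    · simp [my_hatK_adj_lr, eq_comm]
  have hcard : ({j : Fin r | j ≠ i}).ncard = r - 1 := by
    rw [← Nat.card_coe_set_eq, Nat.card_eq_fintype_card]
    simp [Fintype.card_subtype_compl, Finset.filter_ne', Finset.card_erase_of_mem]
  rw [deg, Nat.card_coe_set_eq, hset, Set.ncard_insert_of_notMem (by simp),
      Set.ncard_image_of_injective _ Sum.inl_injective, hcard]
  omega

lemma my_entry_ll (r : ℕ) (hr : 1 ≤ r) (i j : Fin r) :
    stdLapP (hatK r) (.inl i) (.inl j) = if i = j then 1 else 1/(r:ℝ) := by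
  by_cases h : i = j
  · simp [stdLapP, h]
  · have h2 : (Sum.inl i : Fin r ⊕ Fin r) ≠ Sum.inl j := by simp [h]
    have h3 : (hatK r).Adj (.inl i) (.inl j) := h
    simp only [stdLapP, if_neg h2, if_pos h3, my_deg_inl r hr, if_neg h]
    rw [Real.sqrt_mul_self (by positivity)]

lemma my_entry_lr (r : ℕ) (hr : 1 ≤ r) (i j : Fin r) :
    stdLapP (hatK r) (.inl i) (.inr j) = if i = j then 1/Real.sqrt (r:ℝ) else 0 := by
  have h2 : (Sum.inl i : Fin r ⊕ Fin r) ≠ Sum.inr j := by simp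
  by_cases h : i = j
  · have h3 : (hatK r).Adj (.inl i) (.inr j) := h
    simp only [stdLapP, if_neg h2, if_pos h3, my_deg_inl r hr, my_deg_inr, if_pos h]
    norm_num
  · have h3 : ¬ (hatK r).Adj (.inl i) (.inr j) := h
    simp only [stdLapP, if_neg h2, if_neg h3, if_neg h]

lemma my_entry_rl (r : ℕ) (hr : 1 ≤ r) (i j : Fin r) :
    stdLapP (hatK r) (.inr i) (.inl j) = if i = j then 1/Real.sqrt (r:ℝ) else 0 := by
  have h2 : (Sum.inr i : Fin r ⊕ Fin r) ≠ Sum.inl j := by simp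
  by_cases h : i = j
  · have h3 : (hatK r).Adj (.inr i) (.inl j) := h
    simp only [stdLapP, if_neg h2, if_pos h3, my_deg_inl r hr, my_deg_inr, if_pos h]
    norm_num
  · have h3 : ¬ (hatK r).Adj (.inr i) (.inl j) := h
    simp only [stdLapP, if_neg h2, if_neg h3, if_neg h]

lemma my_entry_rr (r : ℕ) (i j : Fin r) :
    stdLapP (hatK r) (.inr i) (.inr j) = if i = j then 1 else 0 := by
  by_cases h : i = j
  · simp [stdLapP, h]
  · have h2 : (Sum.inr i : Fin r ⊕ Fin r) ≠ Sum.inr j := by simp [h]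
    have h3 : ¬ (hatK r).Adj (.inr i) (.inr j) := fun hh => hh
    simp only [stdLapP, if_neg h2, if_neg h3, if_neg h]

open Module in
lemma my_key (r : ℕ) (hr : 2 ≤ r) (lam : ℝ)
    (hlam : (r : ℝ) * (lam - 1) ^ 2 + (lam - 1) = 1) :
    r - 1 ≤ (specP (hatK r)).count lam := by
  unfold specP
  rw [Polynomial.count_roots]
  have hr1 : 1 ≤ r := by omega
  have hrR : (0:ℝ) < r := by exact_mod_cast Nat.pos_of_ne_zero (by omega)
  set s := Real.sqrt (r:ℝ) with hs
  have hs0 : 0 < s := Real.sqrt_pos.2 hrR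
  have hss : s * s = (r:ℝ) := Real.mul_self_sqrt hrR.le
  set c : ℝ := s * (lam - 1) + 1 / s with hc
  let f : (Fin r → ℝ) →ₗ[ℝ] ℝ :=
    { toFun := fun a => ∑ i, a i
      map_add' := fun a b => by simp [Finset.sum_add_distrib]
      map_smul' := fun m a => by simp [Finset.mul_sum] }
  let L : (Fin r → ℝ) →ₗ[ℝ] (Fin r ⊕ Fin r → ℝ) :=
    { toFun := fun a => Sum.elim a (fun i => c * a i)
      map_add' := fun a b => by ext (j | j) <;> simp <;> ring
      map_smul' := fun m a => by ext (j | j) <;> simp <;> ring }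
  set A := stdLapP (hatK r) with hA
  set B := A - lam • (1 : Matrix (Fin r ⊕ Fin r) (Fin r ⊕ Fin r) ℝ) with hB
  have hmem : ∀ a, a ∈ LinearMap.ker f → L a ∈ LinearMap.ker (Matrix.toLin' B) := by
    intro a ha
    rw [LinearMap.mem_ker] at ha ⊢
    have hsum : ∑ i, a i = 0 := ha
    rw [Matrix.toLin'_apply]
    ext (i | i)
    · have : B.mulVec (L a) (Sum.inl i)
          = ∑ j, B (Sum.inl i) (Sum.inl j) * a j + ∑ j, B (Sum.inl i) (Sum.inr j) * (c * a j) := by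
        simp [Matrix.mulVec, dotProduct, Fintype.sum_sum_type, L]
      rw [this]
      have e1 : ∀ j, B (Sum.inl i) (Sum.inl j) * a j
          = (1/(r:ℝ)) * a j + (if i = j then (1 - lam - 1/(r:ℝ)) * a j else 0) := by
        intro j
        rw [hB]
        simp only [Matrix.sub_apply, Matrix.smul_apply, Matrix.one_apply, smul_eq_mul, hA,
          my_entry_ll r hr1]
        by_cases h : i = j
        · simp [h]; ring
        · simp [h, Sum.inl.injEq]
      have e2 : ∀ j, B (Sum.inl i) (Sum.inr j) * (c * a j)
          = if i = j then (1/s) * c * a j else 0 := by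
        intro j
        rw [hB]
        simp only [Matrix.sub_apply, Matrix.smul_apply, Matrix.one_apply, smul_eq_mul, hA,
          my_entry_lr r hr1]
        by_cases h : i = j
        · simp [h, ← hs]; ring
        · simp [h]
      simp only [e1, e2, Finset.sum_add_distrib, ← Finset.mul_sum, hsum, mul_zero, zero_add,
        Finset.sum_ite_eq, Finset.mem_univ, if_true, Pi.zero_apply]
      have hco : (1 - lam - 1/(r:ℝ)) + (1/s) * c = 0 := by
        rw [hc]
        field_simp
        nlinarith [hss, hs0]
      linear_combination (a i) * hco
    · have : B.mulVec (L a) (Sum.inr i)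
          = ∑ j, B (Sum.inr i) (Sum.inl j) * a j + ∑ j, B (Sum.inr i) (Sum.inr j) * (c * a j) := by
        simp [Matrix.mulVec, dotProduct, Fintype.sum_sum_type, L]
      rw [this]
      have e1 : ∀ j, B (Sum.inr i) (Sum.inl j) * a j
          = if i = j then (1/s) * a j else 0 := by
        intro j
        rw [hB]
        simp only [Matrix.sub_apply, Matrix.smul_apply, Matrix.one_apply, smul_eq_mul, hA,
          my_entry_rl r hr1]
        by_cases h : i = j
        · simp [h, ← hs]
        · simp [h, Sum.inl.injEq]
      have e2 : ∀ j, B (Sum.inr i) (Sum.inr j) * (c * a j)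
          = if i = j then (1 - lam) * c * a j else 0 := by
        intro j
        rw [hB]
        simp only [Matrix.sub_apply, Matrix.smul_apply, Matrix.one_apply, smul_eq_mul, hA,
          my_entry_rr r]
        by_cases h : i = j
        · simp [h]; ring
        · simp [h]
      simp only [e1, e2, Finset.sum_ite_eq, Finset.mem_univ, if_true, Pi.zero_apply]
      have hco : (1/s) + (1 - lam) * c = 0 := by
        rw [hc]
        field_simp
        nlinarith [hss, hs0, hlam]
      linear_combination (a i) * hco
  have hLinj : Function.Injective L := by
    intro a b hab
    funext j
    exact congrFun hab (Sum.inl j)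
  let g : LinearMap.ker f →ₗ[ℝ] LinearMap.ker (Matrix.toLin' B) :=
    LinearMap.codRestrict _ (L ∘ₗ (LinearMap.ker f).subtype) (fun x => hmem x x.2)
  have hginj : Function.Injective g := by
    intro x y hxy
    have : L x.1 = L y.1 := congrArg Subtype.val hxy
    exact Subtype.ext (hLinj this)
  have hkerf : finrank ℝ (LinearMap.ker f) = r - 1 := by
    have hrange : LinearMap.range f = ⊤ := by
      rw [LinearMap.range_eq_top]
      intro x
      refine ⟨Pi.single ⟨0, by omega⟩ x, ?_⟩
      simp [f, Finset.sum_pi_single']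
    have h1 := LinearMap.finrank_range_add_finrank_ker f
    rw [hrange] at h1
    simp only [finrank_top, finrank_self, Module.finrank_pi, Fintype.card_fin] at h1
    omega
  have hfin : r - 1 ≤ finrank ℝ (LinearMap.ker (Matrix.toLin' B)) := by
    rw [← hkerf]
    exact LinearMap.finrank_le_finrank_of_injective hginj
  have hfinal := my_count_roots_charpoly_ge A lam (r - 1) hfin
  convert hfinal using 3
  rfl

/-- the numbers `(2r-1∓√(4r+1))/(2r)` are eigenvalues of the
signless standard Laplacian of `K̂_r`, each with multiplicity at least `r-1`. -/
theorem stmt_7 (r : ℕ) (hr : 2 ≤ r) :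
    r - 1 ≤ (specP (hatK r)).count
        ((2 * (r : ℝ) - 1 - Real.sqrt (4 * (r : ℝ) + 1)) / (2 * (r : ℝ))) ∧
    r - 1 ≤ (specP (hatK r)).count
        ((2 * (r : ℝ) - 1 + Real.sqrt (4 * (r : ℝ) + 1)) / (2 * (r : ℝ))) := by
  have hrR : (0:ℝ) < r := by exact_mod_cast Nat.pos_of_ne_zero (by omega)
  have h4 : Real.sqrt (4 * (r:ℝ) + 1) ^ 2 = 4 * (r:ℝ) + 1 :=
    Real.sq_sqrt (by positivity)
  have hr0 : (r:ℝ) ≠ 0 := ne_of_gt hrR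
  constructor
  · refine my_key r hr _ ?_
    field_simp
    ring_nf
    ring_nf at h4
    nlinarith [h4]
  · refine my_key r hr _ ?_
    field_simp
    ring_nf
    ring_nf at h4
    nlinarith [h4]
end
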